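/- Let F be a finite field of order q and let d ≥ 1. Then 1 − q⁻¹ ≥ |GL(d,F)| / |Mat(d,F)| > 1 − q⁻¹ − q⁻² ≥ 1/4, where |Mat(d,F)| = q^{d²} is the number of all d×d matrices over F and |GL(d,F)| is the number of invertible ones. -/

import Mathlib

lemma weier (s : Finset ℕ) (f : ℕ → ℝ) (h0 : ∀ i ∈ s, 0 ≤ f i) (h1 : ∀ i ∈ s, f i ≤ 1) :
    1 - ∑ i ∈ s, f i ≤ ∏ i ∈ s, (1 - f i) := by
  induction s using Finset.cons_induction with
  | empty => simp
  | cons a s ha ih =>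
    rw [Finset.sum_cons, Finset.prod_cons]
    have hS : 0 ≤ ∑ i ∈ s, f i := Finset.sum_nonneg fun i hi => h0 i (Finset.mem_cons_of_mem hi)
    have hP := ih (fun i hi => h0 i (Finset.mem_cons_of_mem hi))
      (fun i hi => h1 i (Finset.mem_cons_of_mem hi))
    have ha0 := h0 a (Finset.mem_cons_self a s)
    have ha1 := h1 a (Finset.mem_cons_self a s)
    nlinarith [mul_le_mul_of_nonneg_left hP (by linarith : (0:ℝ) ≤ 1 - f a)]

/-- For a finite field `F` of order `q` and `d ≥ 1`:
`1 − q⁻¹ ≥ |GL(d,F)|/|Mat(d,F)| > 1 − q⁻¹ − q⁻² ≥ 1/4`,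
where `|Mat(d,F)| = q^(d²)`. -/
theorem proportion_of_invertible_matrices
    {F : Type*} [Field F] [Fintype F] (d : ℕ) (hd : 1 ≤ d) :
    (1 - ((Fintype.card F : ℝ))⁻¹ ≥
      (Nat.card (GL (Fin d) F) : ℝ) / ((Fintype.card F : ℝ) ^ (d ^ 2))) ∧
    ((Nat.card (GL (Fin d) F) : ℝ) / ((Fintype.card F : ℝ) ^ (d ^ 2)) >
      1 - ((Fintype.card F : ℝ))⁻¹ - (((Fintype.card F : ℝ)) ^ 2)⁻¹) ∧
    (1 - ((Fintype.card F : ℝ))⁻¹ - (((Fintype.card F : ℝ)) ^ 2)⁻¹ ≥ 1 / 4) := by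
  set q := Fintype.card F with hqdef
  have hq2 : 2 ≤ q := Fintype.one_lt_card
  have hq0 : (0:ℝ) < (q:ℝ) := by exact_mod_cast Nat.lt_of_lt_of_le two_pos hq2 |>.trans_le le_rfl
  set r : ℝ := ((q:ℝ))⁻¹ with hrdef
  have hr0 : 0 < r := inv_pos.2 hq0
  have hrhalf : r ≤ 1/2 := by
    rw [hrdef, inv_le_comm₀ (by positivity) (by norm_num)]
    have : (2:ℝ) ≤ (q:ℝ) := by exact_mod_cast hq2
    linarith
  have hr1 : r < 1 := by linarith
  -- cardinality formula
  have hcard : (Nat.card (GL (Fin d) F) : ℝ) = ∏ i : Fin d, ((q:ℝ)^d - (q:ℝ)^(i:ℕ)) := by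
    rw [Matrix.card_GL_field, Nat.cast_prod]
    refine Finset.prod_congr rfl fun i _ => ?_
    rw [Nat.cast_sub (Nat.pow_le_pow_right (by omega) (le_of_lt i.isLt))]
    push_cast; ring
  have hden : ((q:ℝ)) ^ (d^2) = ∏ _i : Fin d, (q:ℝ)^d := by
    rw [Finset.prod_const, Finset.card_univ, Fintype.card_fin, ← pow_mul, sq]
  have hratio : (Nat.card (GL (Fin d) F) : ℝ) / ((q:ℝ)) ^ (d^2)
      = ∏ j ∈ Finset.range d, (1 - r^(j+1)) := by
    rw [hcard, hden, ← Finset.prod_div_distrib]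
    have step : ∀ i : Fin d, ((q:ℝ)^d - (q:ℝ)^(i:ℕ))/(q:ℝ)^d = 1 - r^(d - (i:ℕ)) := by
      intro i
      have hpow : (q:ℝ)^(d-(i:ℕ)) * (q:ℝ)^(i:ℕ) = (q:ℝ)^d := by
        rw [← pow_add]; congr 1; omega
      rw [hrdef, inv_pow, ← hpow]
      field_simp
    rw [Finset.prod_congr rfl fun i _ => step i]
    rw [Fin.prod_univ_eq_prod_range (fun i => 1 - r^(d - i)) d]
    rw [← Finset.prod_range_reflect (fun j => 1 - r^(j+1)) d]
    refine Finset.prod_congr rfl fun j hj => ?_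
    have : d - 1 - j + 1 = d - j := by
      have := Finset.mem_range.1 hj; omega
    rw [this]
  obtain ⟨e, rfl⟩ : ∃ e, d = e + 1 := ⟨d - 1, by omega⟩
  rw [hratio, Finset.prod_range_succ', pow_one]
  -- bounds on the factors
  have hfac : ∀ j : ℕ, 0 ≤ r^(j+2) ∧ r^(j+2) ≤ 1 := fun j =>
    ⟨pow_nonneg hr0.le _, pow_le_one₀ hr0.le hr1.le⟩
  set P : ℝ := ∏ j ∈ Finset.range e, (1 - r^(j+1+1)) with hPdef
  have hP1 : P ≤ 1 := Finset.prod_le_one (fun j _ => by have := (hfac j).2; linarith)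
    (fun j _ => by have := (hfac j).1; linarith)
  set S : ℝ := ∑ j ∈ Finset.range e, r^(j+2) with hSdef
  have hPS : 1 - S ≤ P := by
    have := weier (Finset.range e) (fun j => r^(j+2)) (fun j _ => (hfac j).1)
      (fun j _ => (hfac j).2)
    simpa [hPdef, hSdef] using this
  have hgeom : S * (1 - r) = r^2 * (1 - r^e) := by
    have h1 : S = r^2 * ∑ j ∈ Finset.range e, r^j := by
      rw [hSdef, Finset.mul_sum]
      exact Finset.sum_congr rfl fun j _ => by ring
    have h2 : (∑ j ∈ Finset.range e, r^j) * (r - 1) = r^e - 1 := geom_sum_mul r e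
    nlinarith [h1, h2]
  have hre : 0 < r^e * r^2 := by positivity
  have h1r : (0:ℝ) ≤ 1 - r := by linarith
  have key1 : P * (1 - r) ≤ 1 - r := by nlinarith
  have key2 : P * (1 - r) > 1 - r - r^2 := by
    nlinarith [mul_le_mul_of_nonneg_right hPS h1r]
  have hq2inv : (((q:ℝ))^2)⁻¹ = r^2 := by rw [hrdef, inv_pow]
  refine ⟨key1, ?_, ?_⟩
  · rw [hq2inv]; exact key2
  · rw [hq2inv]; nlinarith
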